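/- There exist constants C₁, C₂ > 0 and ε₀ > 0 such that for all ε ∈ (0, ε₀): C₁ ≤ ε·|ln ε|·sup{ |q_h(ξ,θ)| : ξ ∈ [−ξ₁, ξ₂], θ ∈ [0,π] } ≤ C₂. -/

import Mathlib

open Real

noncomputable section

/-- The distance parameter `a_ε`. -/
def aEps (r₁ r₂ ε : ℝ) : ℝ :=
  Real.sqrt ε * Real.sqrt ((2*r₁+ε)*(2*r₂+ε)*(2*r₁+2*r₂+ε)) / (2*(r₁+r₂+ε))

def xi (r : ℝ) (r₁ r₂ ε : ℝ) : ℝ := Real.arsinh (aEps r₁ r₂ ε / r)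

def sZero (r₁ r₂ ε : ℝ) : ℝ := xi r₁ r₁ r₂ ε + xi r₂ r₁ r₂ ε

/-- `w θ ξ = √(cosh ξ − cos θ)`. -/
def w (θ ξ : ℝ) : ℝ := Real.sqrt (Real.cosh ξ - Real.cos θ)

/-- The digamma value `ψ₀(z) = −γ + ∑_{k≥0} (z−1)/((k+1)(k+z))`. -/
def digammaVal (z : ℝ) : ℝ :=
  -Real.eulerMascheroniConstant + ∑' k : ℕ, (z - 1) / ((k + 1) * (k + z))

def rTilde (r₁ r₂ : ℝ) : ℝ := r₁ * r₂ / (r₁ + r₂)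

/-- `μ_j` for `j = 1, 2`. -/
def muConst (r₁ r₂ : ℝ) (j : ℕ) : ℝ :=
  (digammaVal ((if j = 1 then r₁ else r₂) / (r₁ + r₂)) + Real.eulerMascheroniConstant) /
    (digammaVal (r₁ / (r₁ + r₂)) + digammaVal (r₂ / (r₁ + r₂)) +
      2 * Real.eulerMascheroniConstant)

/-- `μ_ε`. -/
def muEps (r₁ r₂ ε : ℝ) : ℝ :=
  (1 / (2 * Real.pi * rTilde r₁ r₂)) *
    (|Real.log ε| + Real.log (rTilde r₁ r₂) + Real.log 2 -
      2 * (digammaVal (r₁ / (r₁ + r₂)) * digammaVal (r₂ / (r₁ + r₂)) -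
          Real.eulerMascheroniConstant ^ 2) /
        (digammaVal (r₁ / (r₁ + r₂)) + digammaVal (r₂ / (r₁ + r₂)) +
          2 * Real.eulerMascheroniConstant))⁻¹

/-- `𝓘₁(ξ,θ;c) = (1/(2 a_ε s₀)) · w_θ(ξ)³ / w_θ(ξ−c)`. -/
def I1 (r₁ r₂ ε ξ θ c : ℝ) : ℝ :=
  (1 / (2 * aEps r₁ r₂ ε * sZero r₁ r₂ ε)) * w θ ξ ^ 3 / w θ (ξ - c)

/-- The blow-up factor `q_h(ξ,θ)`. -/
def qh (r₁ r₂ ε ξ θ : ℝ) : ℝ :=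
  muEps r₁ r₂ ε * muConst r₁ r₂ 1 *
      (I1 r₁ r₂ ε (-ξ) θ (2 * xi r₁ r₁ r₂ ε) +
        I1 r₁ r₂ ε ξ θ (2 * xi r₁ r₁ r₂ ε + 2 * xi r₂ r₁ r₂ ε)) +
    muEps r₁ r₂ ε * muConst r₁ r₂ 2 *
      (I1 r₁ r₂ ε ξ θ (2 * xi r₂ r₁ r₂ ε) +
        I1 r₁ r₂ ε (-ξ) θ (2 * xi r₁ r₁ r₂ ε + 2 * xi r₂ r₁ r₂ ε))

lemma arsinh_le_self' (y : ℝ) (hy : 0 ≤ y) : Real.arsinh y ≤ y := by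
  have h : Real.arsinh y ≤ Real.sinh (Real.arsinh y) :=
    Real.self_le_sinh_iff.2 (Real.arsinh_nonneg_iff.2 hy)
  rwa [Real.sinh_arsinh] at h

lemma half_le_arsinh (y : ℝ) (hy0 : 0 ≤ y) (hy1 : y ≤ 1) : y / 2 ≤ Real.arsinh y := by
  rw [← Real.sinh_le_sinh, Real.sinh_arsinh]
  set t := y / 2 with ht
  have ht0 : 0 ≤ t := by positivity
  have ht1 : t ≤ 1/2 := by simp only [ht]; linarith
  have h1 : 1 - t ≤ Real.exp (-t) := by have := Real.add_one_le_exp (-t); linarith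
  have h2 : Real.exp t * Real.exp (-t) = 1 := by rw [← Real.exp_add]; simp
  have h3 : 0 < Real.exp (-t) := Real.exp_pos _
  have h4 : Real.exp t ≤ 1 + 2*t := by nlinarith [Real.exp_pos t]
  rw [Real.sinh_eq]
  nlinarith

lemma cosh_le_three (x : ℝ) (h : |x| ≤ 1) : Real.cosh x ≤ 3 := by
  have h1 : Real.cosh x ≤ Real.cosh 1 := Real.cosh_le_cosh.2 (by rwa [abs_one])
  have h2 := Real.cosh_eq 1
  have h3 := Real.exp_one_lt_d9
  have h4 : Real.exp (-1) ≤ 1 := by rw [Real.exp_le_one_iff]; norm_num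
  linarith

lemma ratio_le' (θ x y : ℝ) (hxy : |x| ≤ |y|) :
    w θ x ^ 3 / w θ y ≤ Real.cosh x + 1 := by
  have hA0 : 0 ≤ Real.cosh x - Real.cos θ :=
    sub_nonneg.2 ((Real.cos_le_one θ).trans (Real.one_le_cosh x))
  have hAB : Real.cosh x - Real.cos θ ≤ Real.cosh y - Real.cos θ := by
    have := Real.cosh_le_cosh.2 hxy; linarith
  have hle : w θ x ≤ w θ y := Real.sqrt_le_sqrt hAB
  have hwx0 : 0 ≤ w θ x := Real.sqrt_nonneg _
  have hwy0 : 0 ≤ w θ y := Real.sqrt_nonneg _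
  have hsq : w θ x ^ 2 = Real.cosh x - Real.cos θ := Real.sq_sqrt hA0
  have hbnd : Real.cosh x - Real.cos θ ≤ Real.cosh x + 1 := by
    have := Real.neg_one_le_cos θ; linarith
  rcases eq_or_lt_of_le hwy0 with h0 | h0
  · rw [← h0]; simp; nlinarith [Real.one_le_cosh x]
  · rw [div_le_iff₀ h0]
    calc w θ x ^ 3 = (w θ x ^2) * w θ x := by ring
    _ ≤ (Real.cosh x + 1) * w θ y := by
        apply mul_le_mul (by rw [hsq]; exact hbnd) hle hwx0 (by nlinarith [Real.one_le_cosh x])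

lemma ratio_ge' (c : ℝ) (hc0 : 0 ≤ c) (hc1 : c ≤ 1) :
    1 ≤ w Real.pi 0 ^ 3 / w Real.pi (0 - c) := by
  have hcosπ : Real.cos Real.pi = -1 := Real.cos_pi
  have hw0 : w Real.pi 0 = Real.sqrt 2 := by
    simp [w, Real.cosh_zero, hcosπ]
    norm_num
  have hwc : w Real.pi (0 - c) = Real.sqrt (Real.cosh c + 1) := by
    simp [w, hcosπ, Real.cosh_neg]
  have hch : Real.cosh c ≤ 3 := cosh_le_three c (by rw [abs_of_nonneg hc0]; exact hc1)
  have hpos : 0 < w Real.pi (0 - c) := by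
    rw [hwc]; apply Real.sqrt_pos.2; nlinarith [Real.one_le_cosh c]
  rw [le_div_iff₀ hpos, one_mul, hwc, hw0]
  have h8 : Real.sqrt (Real.cosh c + 1) ≤ Real.sqrt 8 := by
    apply Real.sqrt_le_sqrt; linarith
  have h9 : Real.sqrt 2 ^ 3 = Real.sqrt 8 := by
    rw [show (8:ℝ) = 2^2*2 by norm_num, Real.sqrt_mul (by positivity),
      Real.sqrt_sq (by norm_num : (0:ℝ) ≤ 2), pow_succ, Real.sq_sqrt (by norm_num : (0:ℝ) ≤ 2)]
  linarith

lemma summable_dig (z : ℝ) (hz0 : 0 < z) (hz1 : z < 1) :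
    Summable (fun k : ℕ => (z - 1) / (((k:ℝ) + 1) * ((k:ℝ) + z))) := by
  have hbase : Summable (fun k : ℕ => ((1-z)/z) * (1 / ((k:ℝ)+1)^2)) := by
    apply Summable.mul_left
    have h : Summable (fun n : ℕ => 1 / ((n:ℝ))^2) := by
      rw [summable_one_div_nat_pow]; norm_num
    have := (summable_nat_add_iff (f := fun n : ℕ => 1 / ((n:ℝ))^2) 1).2 h
    simpa using this
  apply Summable.of_abs
  apply Summable.of_nonneg_of_le (fun k => abs_nonneg _) _ hbase
  intro k
  have hk1 : (0:ℝ) < (k:ℝ) + 1 := by positivity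
  have hkz : (0:ℝ) < (k:ℝ) + z := by positivity
  calc |(z - 1) / (((k:ℝ) + 1) * ((k:ℝ) + z))|
      = (1-z) / (((k:ℝ)+1)*((k:ℝ)+z)) := by
        rw [abs_div, abs_of_neg (by linarith : z - 1 < 0), abs_of_pos (by positivity)]
        ring_nf
    _ ≤ (1-z) / (z*((k:ℝ)+1)^2) := by
        rw [div_le_div_iff₀ (by positivity) (by positivity)]
        have hk0 : (0:ℝ) ≤ (k:ℝ) := Nat.cast_nonneg k
        nlinarith [mul_nonneg (mul_nonneg (by linarith : (0:ℝ) ≤ 1-z) hk1.le)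
          (mul_nonneg hk0 (by linarith : (0:ℝ) ≤ 1-z))]
    _ = (1-z)/z * (1 / ((k:ℝ)+1)^2) := by rw [div_mul_div_comm, mul_one]

lemma dig_neg (z : ℝ) (hz0 : 0 < z) (hz1 : z < 1) :
    digammaVal z + Real.eulerMascheroniConstant < 0 := by
  have hs := summable_dig z hz0 hz1
  have h : (∑' k : ℕ, (z - 1) / (((k:ℝ) + 1) * ((k:ℝ) + z))) < ∑' _ : ℕ, (0:ℝ) := by
    apply Summable.tsum_lt_tsum (i := 0) _ _ hs summable_zero
    · intro k
      apply div_nonpos_of_nonpos_of_nonneg (by linarith)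
      positivity
    · simp only [Nat.cast_zero, zero_add]
      apply div_neg_of_neg_of_pos (by linarith)
      nlinarith
  simp only [tsum_zero] at h
  unfold digammaVal
  linarith

lemma abs_le_abs_sub' (x c : ℝ) (hx : x ≤ c/2) (hc : 0 ≤ c) : |x| ≤ |x - c| := by
  have h1 : |x - c| = c - x := by rw [abs_sub_comm, abs_of_nonneg (by linarith)]
  rw [h1, abs_le]
  constructor <;> linarith

lemma I1_nonneg (r₁ r₂ ε ξ θ c : ℝ) (h : 0 ≤ aEps r₁ r₂ ε * sZero r₁ r₂ ε) :
    0 ≤ I1 r₁ r₂ ε ξ θ c := by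
  unfold I1
  apply div_nonneg (mul_nonneg _ (pow_nonneg (Real.sqrt_nonneg _) 3)) (Real.sqrt_nonneg _)
  apply div_nonneg zero_le_one
  linarith

lemma I1_le (r₁ r₂ ε x θ c : ℝ) (h : 0 ≤ aEps r₁ r₂ ε * sZero r₁ r₂ ε)
    (hx1 : |x| ≤ 1) (hxc : |x| ≤ |x - c|) :
    I1 r₁ r₂ ε x θ c ≤ 4 * (1/(2 * aEps r₁ r₂ ε * sZero r₁ r₂ ε)) := by
  unfold I1
  rw [mul_div_assoc]
  have h1 : w θ x ^ 3 / w θ (x - c) ≤ Real.cosh x + 1 := ratio_le' θ x (x-c) hxc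
  have h2 : Real.cosh x + 1 ≤ 4 := by linarith [cosh_le_three x hx1]
  have hP' : 0 ≤ 1/(2 * aEps r₁ r₂ ε * sZero r₁ r₂ ε) := by
    apply div_nonneg zero_le_one; linarith
  calc (1/(2 * aEps r₁ r₂ ε * sZero r₁ r₂ ε)) * (w θ x ^ 3 / w θ (x - c))
      ≤ (1/(2 * aEps r₁ r₂ ε * sZero r₁ r₂ ε)) * 4 :=
        mul_le_mul_of_nonneg_left (h1.trans h2) hP'
    _ = 4 * (1/(2 * aEps r₁ r₂ ε * sZero r₁ r₂ ε)) := mul_comm _ _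

lemma I1_ge (r₁ r₂ ε c : ℝ) (h : 0 < aEps r₁ r₂ ε * sZero r₁ r₂ ε)
    (hc0 : 0 ≤ c) (hc1 : c ≤ 1) :
    1/(2 * aEps r₁ r₂ ε * sZero r₁ r₂ ε) ≤ I1 r₁ r₂ ε 0 Real.pi c := by
  unfold I1
  rw [mul_div_assoc]
  have hP' : 0 < 1/(2 * aEps r₁ r₂ ε * sZero r₁ r₂ ε) := by
    apply div_pos one_pos; linarith
  have hr := ratio_ge' c hc0 hc1
  calc 1/(2 * aEps r₁ r₂ ε * sZero r₁ r₂ ε)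
      = (1/(2 * aEps r₁ r₂ ε * sZero r₁ r₂ ε)) * 1 := (mul_one _).symm
    _ ≤ (1/(2 * aEps r₁ r₂ ε * sZero r₁ r₂ ε)) * (w Real.pi 0 ^ 3 / w Real.pi (0 - c)) :=
        mul_le_mul_of_nonneg_left hr hP'.le

lemma aEps_sq_bounds (r₁ r₂ ε : ℝ) (hr₁ : 0 < r₁) (hr₂ : 0 < r₂) (hε0 : 0 < ε) (hε1 : ε ≤ 1) :
    2*r₁*r₂*(r₁+r₂) / ((r₁+r₂+1)^2) * ε ≤ aEps r₁ r₂ ε ^ 2 ∧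
    aEps r₁ r₂ ε ^ 2 ≤ (2*r₁+1)*(2*r₂+1)*(2*r₁+2*r₂+1) / (4*(r₁+r₂)^2) * ε := by
  have hs : (0:ℝ) < r₁ + r₂ := by linarith
  have hX0 : (0:ℝ) ≤ (2*r₁+ε)*(2*r₂+ε)*(2*r₁+2*r₂+ε) := by positivity
  have ha2 : aEps r₁ r₂ ε ^ 2 =
      ε * ((2*r₁+ε)*(2*r₂+ε)*(2*r₁+2*r₂+ε)) / (4*(r₁+r₂+ε)^2) := by
    unfold aEps
    rw [div_pow, mul_pow, Real.sq_sqrt hε0.le, Real.sq_sqrt hX0]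
    ring
  constructor
  · rw [ha2, div_mul_eq_mul_div, div_le_div_iff₀ (by positivity) (by positivity)]
    have hXge : (2*r₁)*(2*r₂)*(2*r₁+2*r₂) ≤ (2*r₁+ε)*(2*r₂+ε)*(2*r₁+2*r₂+ε) := by
      apply mul_le_mul (mul_le_mul (by linarith) (by linarith) (by linarith) (by linarith))
        (by linarith) (by linarith) (by nlinarith)
    have hden : ((r₁+r₂+ε)^2 : ℝ) ≤ (r₁+r₂+1)^2 := by nlinarith
    have hkey : ε * ((2*r₁)*(2*r₂)*(2*r₁+2*r₂)) * ((r₁+r₂+ε)^2) ≤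
        ε * ((2*r₁+ε)*(2*r₂+ε)*(2*r₁+2*r₂+ε)) * ((r₁+r₂+1)^2) :=
      mul_le_mul (mul_le_mul_of_nonneg_left hXge hε0.le) hden (by positivity)
        (mul_nonneg hε0.le hX0)
    nlinarith [hkey]
  · rw [ha2, div_mul_eq_mul_div, div_le_div_iff₀ (by positivity) (by positivity)]
    have hXle : (2*r₁+ε)*(2*r₂+ε)*(2*r₁+2*r₂+ε) ≤ (2*r₁+1)*(2*r₂+1)*(2*r₁+2*r₂+1) := by
      apply mul_le_mul (mul_le_mul (by linarith) (by linarith) (by linarith) (by linarith))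
        (by linarith) (by linarith) (by nlinarith)
    have hkey : ε * ((2*r₁+ε)*(2*r₂+ε)*(2*r₁+2*r₂+ε)) * ((r₁+r₂)^2) ≤
        ε * ((2*r₁+1)*(2*r₂+1)*(2*r₁+2*r₂+1)) * ((r₁+r₂+ε)^2) :=
      mul_le_mul (mul_le_mul_of_nonneg_left hXle hε0.le) (by nlinarith) (by positivity)
        (by positivity)
    nlinarith [hkey]

set_option maxHeartbeats 1000000 in
theorem stmt13 (r₁ r₂ : ℝ) (hr₁ : 0 < r₁) (hr₂ : 0 < r₂) :
    ∃ C₁ > 0, ∃ C₂ > 0, ∃ ε₀ > 0, ∀ ε ∈ Set.Ioo 0 ε₀,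
      C₁ ≤ ε * |Real.log ε| *
          sSup {y : ℝ | ∃ ξ ∈ Set.Icc (-(xi r₁ r₁ r₂ ε)) (xi r₂ r₁ r₂ ε),
            ∃ θ ∈ Set.Icc 0 Real.pi, y = |qh r₁ r₂ ε ξ θ|} ∧
      ε * |Real.log ε| *
          sSup {y : ℝ | ∃ ξ ∈ Set.Icc (-(xi r₁ r₁ r₂ ε)) (xi r₂ r₁ r₂ ε),
            ∃ θ ∈ Set.Icc 0 Real.pi, y = |qh r₁ r₂ ε ξ θ|} ≤ C₂ := by
  have hs : (0:ℝ) < r₁ + r₂ := by linarith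
  have hrt : 0 < rTilde r₁ r₂ := by unfold rTilde; positivity
  have hrt₁ : rTilde r₁ r₂ ≤ r₁ := by
    unfold rTilde; rw [div_le_iff₀ hs]; nlinarith
  have hrt₂ : rTilde r₁ r₂ ≤ r₂ := by
    unfold rTilde; rw [div_le_iff₀ hs]; nlinarith
  have hz₁0 : 0 < r₁/(r₁+r₂) := by positivity
  have hz₁1 : r₁/(r₁+r₂) < 1 := by rw [div_lt_one hs]; linarith
  have hz₂0 : 0 < r₂/(r₁+r₂) := by positivity
  have hz₂1 : r₂/(r₁+r₂) < 1 := by rw [div_lt_one hs]; linarith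
  have hψ₁ := dig_neg _ hz₁0 hz₁1
  have hψ₂ := dig_neg _ hz₂0 hz₂1
  have hd : digammaVal (r₁/(r₁+r₂)) + digammaVal (r₂/(r₁+r₂)) +
      2*Real.eulerMascheroniConstant < 0 := by linarith
  have hm₁ : 0 < muConst r₁ r₂ 1 := by
    unfold muConst
    rw [if_pos rfl]
    exact div_pos_of_neg_of_neg (by linarith) (by linarith)
  have hm₂ : 0 < muConst r₁ r₂ 2 := by
    unfold muConst
    rw [if_neg (by norm_num)]
    exact div_pos_of_neg_of_neg (by linarith) (by linarith)
  have hmsum : muConst r₁ r₂ 1 + muConst r₁ r₂ 2 = 1 := by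
    unfold muConst
    rw [if_pos rfl, if_neg (by norm_num), ← add_div,
      show (digammaVal (r₁/(r₁+r₂)) + Real.eulerMascheroniConstant) +
        (digammaVal (r₂/(r₁+r₂)) + Real.eulerMascheroniConstant) =
        digammaVal (r₁/(r₁+r₂)) + digammaVal (r₂/(r₁+r₂)) +
        2*Real.eulerMascheroniConstant from by ring]
    exact div_self (by linarith)
  obtain ⟨K, hK⟩ : ∃ x : ℝ, x = Real.log (rTilde r₁ r₂) + Real.log 2 -
      2 * (digammaVal (r₁ / (r₁ + r₂)) * digammaVal (r₂ / (r₁ + r₂)) -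
          Real.eulerMascheroniConstant ^ 2) /
        (digammaVal (r₁ / (r₁ + r₂)) + digammaVal (r₂ / (r₁ + r₂)) +
          2 * Real.eulerMascheroniConstant) := ⟨_, rfl⟩
  obtain ⟨c₂, hc₂def⟩ : ∃ x : ℝ, x = (2*r₁+1)*(2*r₂+1)*(2*r₁+2*r₂+1) / (4*(r₁+r₂)^2) := ⟨_, rfl⟩
  obtain ⟨c₁, hc₁def⟩ : ∃ x : ℝ, x = 2*r₁*r₂*(r₁+r₂) / ((r₁+r₂+1)^2) := ⟨_, rfl⟩
  have hc₁ : 0 < c₁ := by rw [hc₁def]; positivity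
  have hc₂ : 0 < c₂ := by rw [hc₂def]; positivity
  have hπ := Real.pi_pos
  refine ⟨1/(4*Real.pi*c₂), by positivity, 8/(Real.pi*c₁), by positivity,
    min (Real.exp (-1-2*|K|)) (min 1 ((rTilde r₁ r₂)^2/(4*c₂))),
    lt_min (Real.exp_pos _) (lt_min one_pos (div_pos (pow_pos hrt 2) (by positivity))), ?_⟩
  rintro ε ⟨hε0, hεlt⟩
  have hε1 : ε ≤ 1 :=
    le_of_lt (lt_of_lt_of_le hεlt ((min_le_right _ _).trans (min_le_left _ _)))
  have hεexp : ε < Real.exp (-1-2*|K|) := lt_of_lt_of_le hεlt (min_le_left _ _)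
  have hεrt : ε ≤ (rTilde r₁ r₂)^2/(4*c₂) :=
    le_of_lt (lt_of_lt_of_le hεlt ((min_le_right _ _).trans (min_le_right _ _)))
  have hlog : Real.log ε < -1-2*|K| := by
    calc Real.log ε < Real.log (Real.exp (-1-2*|K|)) := Real.log_lt_log hε0 hεexp
    _ = -1-2*|K| := Real.log_exp _
  have habs : |Real.log ε| = -Real.log ε := abs_of_neg (by linarith [abs_nonneg K])
  have hL1 : 1 + 2*|K| ≤ |Real.log ε| := by rw [habs]; linarith
  have hlogpos : 0 < |Real.log ε| := by linarith [abs_nonneg K, hL1]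
  -- aEps facts
  have ha0 : 0 ≤ aEps r₁ r₂ ε := by
    unfold aEps
    apply div_nonneg (mul_nonneg (Real.sqrt_nonneg _) (Real.sqrt_nonneg _))
    positivity
  have hbounds := aEps_sq_bounds r₁ r₂ ε hr₁ hr₂ hε0 hε1
  have ha2l : c₁ * ε ≤ aEps r₁ r₂ ε ^ 2 := by rw [hc₁def]; exact hbounds.1
  have ha2u : aEps r₁ r₂ ε ^ 2 ≤ c₂ * ε := by rw [hc₂def]; exact hbounds.2
  have haps : 0 < aEps r₁ r₂ ε := by
    have h2 : 0 < aEps r₁ r₂ ε ^ 2 := lt_of_lt_of_le (mul_pos hc₁ hε0) ha2l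
    rcases ha0.lt_or_eq with h | h
    · exact h
    · exfalso; rw [← h] at h2; simp at h2
  have hart : aEps r₁ r₂ ε ≤ rTilde r₁ r₂ / 2 := by
    have h1 : c₂*ε ≤ (rTilde r₁ r₂)^2/4 := by
      calc c₂*ε ≤ c₂ * ((rTilde r₁ r₂)^2/(4*c₂)) := mul_le_mul_of_nonneg_left hεrt hc₂.le
      _ = (rTilde r₁ r₂)^2/4 := by field_simp [hc₂.ne']

    have h2 : aEps r₁ r₂ ε ^ 2 ≤ (rTilde r₁ r₂/2)^2 := by
      have : (rTilde r₁ r₂/2)^2 = (rTilde r₁ r₂)^2/4 := by ring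
      linarith [ha2u, h1]
    calc aEps r₁ r₂ ε = Real.sqrt (aEps r₁ r₂ ε ^ 2) := (Real.sqrt_sq ha0).symm
    _ ≤ Real.sqrt ((rTilde r₁ r₂/2)^2) := Real.sqrt_le_sqrt h2
    _ = rTilde r₁ r₂/2 := Real.sqrt_sq (by linarith)
  have har₁ : aEps r₁ r₂ ε ≤ r₁ := by linarith
  have har₂ : aEps r₁ r₂ ε ≤ r₂ := by linarith
  -- xi bounds
  have hx₁u : xi r₁ r₁ r₂ ε ≤ aEps r₁ r₂ ε / r₁ := by
    unfold xi; exact arsinh_le_self' _ (by positivity)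
  have hx₂u : xi r₂ r₁ r₂ ε ≤ aEps r₁ r₂ ε / r₂ := by
    unfold xi; exact arsinh_le_self' _ (by positivity)
  have hx₁l : aEps r₁ r₂ ε / (2*r₁) ≤ xi r₁ r₁ r₂ ε := by
    unfold xi
    have h := half_le_arsinh (aEps r₁ r₂ ε / r₁) (by positivity)
      (by rw [div_le_one hr₁]; exact har₁)
    calc aEps r₁ r₂ ε / (2*r₁) = (aEps r₁ r₂ ε / r₁)/2 := by ring
    _ ≤ _ := h
  have hx₂l : aEps r₁ r₂ ε / (2*r₂) ≤ xi r₂ r₁ r₂ ε := by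
    unfold xi
    have h := half_le_arsinh (aEps r₁ r₂ ε / r₂) (by positivity)
      (by rw [div_le_one hr₂]; exact har₂)
    calc aEps r₁ r₂ ε / (2*r₂) = (aEps r₁ r₂ ε / r₂)/2 := by ring
    _ ≤ _ := h
  have hx₁pos : 0 < xi r₁ r₁ r₂ ε := lt_of_lt_of_le (by positivity) hx₁l
  have hx₂pos : 0 < xi r₂ r₁ r₂ ε := lt_of_lt_of_le (by positivity) hx₂l
  have hs₀eq : sZero r₁ r₂ ε = xi r₁ r₁ r₂ ε + xi r₂ r₁ r₂ ε := rfl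
  have hs₀pos : 0 < sZero r₁ r₂ ε := by rw [hs₀eq]; linarith
  have hs₀u' : rTilde r₁ r₂ * sZero r₁ r₂ ε ≤ aEps r₁ r₂ ε := by
    have h1 : sZero r₁ r₂ ε ≤ aEps r₁ r₂ ε / r₁ + aEps r₁ r₂ ε / r₂ := by
      rw [hs₀eq]; linarith
    have h2 : rTilde r₁ r₂ * (aEps r₁ r₂ ε / r₁ + aEps r₁ r₂ ε / r₂) = aEps r₁ r₂ ε := by
      unfold rTilde; field_simp; ring
    calc rTilde r₁ r₂ * sZero r₁ r₂ ε
        ≤ rTilde r₁ r₂ * (aEps r₁ r₂ ε / r₁ + aEps r₁ r₂ ε / r₂) :=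
          mul_le_mul_of_nonneg_left h1 hrt.le
      _ = aEps r₁ r₂ ε := h2
  have hs₀l' : aEps r₁ r₂ ε ≤ 2 * rTilde r₁ r₂ * sZero r₁ r₂ ε := by
    have h1 : aEps r₁ r₂ ε / (2*r₁) + aEps r₁ r₂ ε / (2*r₂) ≤ sZero r₁ r₂ ε := by
      rw [hs₀eq]; linarith
    have h2 : 2 * rTilde r₁ r₂ * (aEps r₁ r₂ ε / (2*r₁) + aEps r₁ r₂ ε / (2*r₂)) =
        aEps r₁ r₂ ε := by
      unfold rTilde; field_simp; ring
    calc aEps r₁ r₂ ε = 2 * rTilde r₁ r₂ * (aEps r₁ r₂ ε / (2*r₁) + aEps r₁ r₂ ε / (2*r₂)) :=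
          h2.symm
      _ ≤ 2 * rTilde r₁ r₂ * sZero r₁ r₂ ε :=
          mul_le_mul_of_nonneg_left h1 (by positivity)
  have hs₀half : sZero r₁ r₂ ε ≤ 1/2 :=
    le_of_mul_le_mul_left (by linarith [hs₀u', hart] :
      rTilde r₁ r₂ * sZero r₁ r₂ ε ≤ rTilde r₁ r₂ * (1/2)) hrt
  have hx₁s : xi r₁ r₁ r₂ ε ≤ sZero r₁ r₂ ε := by rw [hs₀eq]; linarith
  have hx₂s : xi r₂ r₁ r₂ ε ≤ sZero r₁ r₂ ε := by rw [hs₀eq]; linarith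
  have hP : 0 < aEps r₁ r₂ ε * sZero r₁ r₂ ε := mul_pos haps hs₀pos
  have hMpos : 0 < 1/(2 * aEps r₁ r₂ ε * sZero r₁ r₂ ε) :=
    div_pos one_pos (mul_pos (mul_pos two_pos haps) hs₀pos)
  have hM_u : 1/(2 * aEps r₁ r₂ ε * sZero r₁ r₂ ε) ≤ rTilde r₁ r₂/(c₁*ε) := by
    rw [div_le_div_iff₀ (mul_pos (mul_pos two_pos haps) hs₀pos) (mul_pos hc₁ hε0)]
    linarith [mul_le_mul_of_nonneg_left hs₀l' haps.le, ha2l]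
  have hM_l : rTilde r₁ r₂/(2*c₂*ε) ≤ 1/(2 * aEps r₁ r₂ ε * sZero r₁ r₂ ε) := by
    rw [div_le_div_iff₀ (mul_pos (mul_pos two_pos hc₂) hε0)
      (mul_pos (mul_pos two_pos haps) hs₀pos)]
    linarith [mul_le_mul_of_nonneg_left hs₀u' haps.le, ha2u]
  -- muEps
  have hmuEq : muEps r₁ r₂ ε = 1/(2*Real.pi*rTilde r₁ r₂) * (|Real.log ε| + K)⁻¹ := by
    rw [hK]; unfold muEps; ring
  have hΛl : |Real.log ε|/2 ≤ |Real.log ε| + K := by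
    have h1 := neg_abs_le K; linarith
  have hΛu : |Real.log ε| + K ≤ 2*|Real.log ε| := by
    have h1 := le_abs_self K; linarith
  have hΛpos : 0 < |Real.log ε| + K := by linarith
  have hfacpos : 0 < 1/(2*Real.pi*rTilde r₁ r₂) :=
    div_pos one_pos (mul_pos (mul_pos two_pos hπ) hrt)
  have hmu_pos : 0 < muEps r₁ r₂ ε := by
    rw [hmuEq]; exact mul_pos hfacpos (inv_pos.2 hΛpos)
  have hmu_u : muEps r₁ r₂ ε ≤ 1/(Real.pi * rTilde r₁ r₂ * |Real.log ε|) := by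
    rw [hmuEq]
    have h1 : (|Real.log ε| + K)⁻¹ ≤ (|Real.log ε|/2)⁻¹ :=
      inv_anti₀ (by linarith) hΛl
    calc 1/(2*Real.pi*rTilde r₁ r₂) * (|Real.log ε| + K)⁻¹
        ≤ 1/(2*Real.pi*rTilde r₁ r₂) * (|Real.log ε|/2)⁻¹ :=
          mul_le_mul_of_nonneg_left h1 hfacpos.le
      _ = 1/(Real.pi * rTilde r₁ r₂ * |Real.log ε|) := by
          field_simp [hπ.ne', hrt.ne', hlogpos.ne']
  have hmu_l : 1/(4*Real.pi*rTilde r₁ r₂*|Real.log ε|) ≤ muEps r₁ r₂ ε := by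
    rw [hmuEq]
    have h1 : (2*|Real.log ε|)⁻¹ ≤ (|Real.log ε| + K)⁻¹ :=
      inv_anti₀ hΛpos hΛu
    calc 1/(4*Real.pi*rTilde r₁ r₂*|Real.log ε|)
        = 1/(2*Real.pi*rTilde r₁ r₂) * (2*|Real.log ε|)⁻¹ := by
          field_simp [hπ.ne', hrt.ne', hlogpos.ne']
          ring
      _ ≤ _ := mul_le_mul_of_nonneg_left h1 hfacpos.le
  -- qh bounds
  have hqh_nonneg : ∀ ξ θ : ℝ, 0 ≤ qh r₁ r₂ ε ξ θ := by
    intro ξ θ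
    unfold qh
    have i1 := I1_nonneg r₁ r₂ ε (-ξ) θ (2 * xi r₁ r₁ r₂ ε) hP.le
    have i2 := I1_nonneg r₁ r₂ ε ξ θ (2 * xi r₁ r₁ r₂ ε + 2 * xi r₂ r₁ r₂ ε) hP.le
    have i3 := I1_nonneg r₁ r₂ ε ξ θ (2 * xi r₂ r₁ r₂ ε) hP.le
    have i4 := I1_nonneg r₁ r₂ ε (-ξ) θ (2 * xi r₁ r₁ r₂ ε + 2 * xi r₂ r₁ r₂ ε) hP.le
    have p1 : 0 ≤ muEps r₁ r₂ ε * muConst r₁ r₂ 1 := (mul_pos hmu_pos hm₁).le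
    have p2 : 0 ≤ muEps r₁ r₂ ε * muConst r₁ r₂ 2 := (mul_pos hmu_pos hm₂).le
    have := add_nonneg (mul_nonneg p1 (add_nonneg i1 i2)) (mul_nonneg p2 (add_nonneg i3 i4))
    linarith
  have hqh_le : ∀ ξ, -(xi r₁ r₁ r₂ ε) ≤ ξ → ξ ≤ xi r₂ r₁ r₂ ε → ∀ θ : ℝ,
      qh r₁ r₂ ε ξ θ ≤
        8 * (muEps r₁ r₂ ε * (1/(2 * aEps r₁ r₂ ε * sZero r₁ r₂ ε))) := by
    intro ξ h1 h2 θ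
    have habsξ : |ξ| ≤ 1 := abs_le.2 ⟨by linarith, by linarith⟩
    have habsξ' : |(-ξ)| ≤ 1 := by rwa [abs_neg]
    have c1 := I1_le r₁ r₂ ε (-ξ) θ (2 * xi r₁ r₁ r₂ ε) hP.le habsξ'
      (abs_le_abs_sub' _ _ (by linarith) (by linarith))
    have c2 := I1_le r₁ r₂ ε ξ θ (2 * xi r₁ r₁ r₂ ε + 2 * xi r₂ r₁ r₂ ε) hP.le habsξ
      (abs_le_abs_sub' _ _ (by linarith) (by linarith))
    have c3 := I1_le r₁ r₂ ε ξ θ (2 * xi r₂ r₁ r₂ ε) hP.le habsξ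
      (abs_le_abs_sub' _ _ (by linarith) (by linarith))
    have c4 := I1_le r₁ r₂ ε (-ξ) θ (2 * xi r₁ r₁ r₂ ε + 2 * xi r₂ r₁ r₂ ε) hP.le habsξ'
      (abs_le_abs_sub' _ _ (by linarith) (by linarith))
    unfold qh
    have e1 : muEps r₁ r₂ ε * muConst r₁ r₂ 1 *
        (I1 r₁ r₂ ε (-ξ) θ (2 * xi r₁ r₁ r₂ ε) +
          I1 r₁ r₂ ε ξ θ (2 * xi r₁ r₁ r₂ ε + 2 * xi r₂ r₁ r₂ ε)) ≤
        muEps r₁ r₂ ε * muConst r₁ r₂ 1 *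
          (8 * (1/(2 * aEps r₁ r₂ ε * sZero r₁ r₂ ε))) :=
      mul_le_mul_of_nonneg_left (by linarith) (mul_pos hmu_pos hm₁).le
    have e2 : muEps r₁ r₂ ε * muConst r₁ r₂ 2 *
        (I1 r₁ r₂ ε ξ θ (2 * xi r₂ r₁ r₂ ε) +
          I1 r₁ r₂ ε (-ξ) θ (2 * xi r₁ r₁ r₂ ε + 2 * xi r₂ r₁ r₂ ε)) ≤
        muEps r₁ r₂ ε * muConst r₁ r₂ 2 *
          (8 * (1/(2 * aEps r₁ r₂ ε * sZero r₁ r₂ ε))) :=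
      mul_le_mul_of_nonneg_left (by linarith) (mul_pos hmu_pos hm₂).le
    have efin : muEps r₁ r₂ ε * muConst r₁ r₂ 1 *
          (8 * (1/(2 * aEps r₁ r₂ ε * sZero r₁ r₂ ε))) +
        muEps r₁ r₂ ε * muConst r₁ r₂ 2 *
          (8 * (1/(2 * aEps r₁ r₂ ε * sZero r₁ r₂ ε))) =
        8 * (muEps r₁ r₂ ε * (1/(2 * aEps r₁ r₂ ε * sZero r₁ r₂ ε))) := by
      linear_combination (8 * (muEps r₁ r₂ ε) *
        (1/(2 * aEps r₁ r₂ ε * sZero r₁ r₂ ε))) * hmsum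
    linarith
  set S := {y : ℝ | ∃ ξ ∈ Set.Icc (-(xi r₁ r₁ r₂ ε)) (xi r₂ r₁ r₂ ε),
      ∃ θ ∈ Set.Icc 0 Real.pi, y = |qh r₁ r₂ ε ξ θ|} with hS
  have hub : ∀ y ∈ S, y ≤ 8 * (muEps r₁ r₂ ε * (1/(2 * aEps r₁ r₂ ε * sZero r₁ r₂ ε))) := by
    rintro y ⟨ξ, hξ, θ, hθ, rfl⟩
    rw [abs_of_nonneg (hqh_nonneg ξ θ)]
    exact hqh_le ξ hξ.1 hξ.2 θ
  have hmem : |qh r₁ r₂ ε 0 Real.pi| ∈ S := by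
    refine ⟨0, ⟨by linarith, by linarith⟩, Real.pi, ⟨hπ.le, le_refl _⟩, rfl⟩
  have hq0 : 2 * (muEps r₁ r₂ ε * (1/(2 * aEps r₁ r₂ ε * sZero r₁ r₂ ε))) ≤
      qh r₁ r₂ ε 0 Real.pi := by
    unfold qh
    simp only [neg_zero]
    have g1 := I1_ge r₁ r₂ ε (2 * xi r₁ r₁ r₂ ε) hP (by linarith) (by linarith)
    have g2 := I1_ge r₁ r₂ ε (2 * xi r₁ r₁ r₂ ε + 2 * xi r₂ r₁ r₂ ε) hP (by linarith)
      (by rw [hs₀eq] at hs₀half; linarith)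
    have g3 := I1_ge r₁ r₂ ε (2 * xi r₂ r₁ r₂ ε) hP (by linarith) (by linarith)
    have e1 : muEps r₁ r₂ ε * muConst r₁ r₂ 1 *
          (2 * (1/(2 * aEps r₁ r₂ ε * sZero r₁ r₂ ε))) ≤
        muEps r₁ r₂ ε * muConst r₁ r₂ 1 *
          (I1 r₁ r₂ ε 0 Real.pi (2 * xi r₁ r₁ r₂ ε) +
            I1 r₁ r₂ ε 0 Real.pi (2 * xi r₁ r₁ r₂ ε + 2 * xi r₂ r₁ r₂ ε)) :=
      mul_le_mul_of_nonneg_left (by linarith) (mul_pos hmu_pos hm₁).le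
    have e2 : muEps r₁ r₂ ε * muConst r₁ r₂ 2 *
          (2 * (1/(2 * aEps r₁ r₂ ε * sZero r₁ r₂ ε))) ≤
        muEps r₁ r₂ ε * muConst r₁ r₂ 2 *
          (I1 r₁ r₂ ε 0 Real.pi (2 * xi r₂ r₁ r₂ ε) +
            I1 r₁ r₂ ε 0 Real.pi (2 * xi r₁ r₁ r₂ ε + 2 * xi r₂ r₁ r₂ ε)) :=
      mul_le_mul_of_nonneg_left (by linarith) (mul_pos hmu_pos hm₂).le
    have efin : muEps r₁ r₂ ε * muConst r₁ r₂ 1 *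
          (2 * (1/(2 * aEps r₁ r₂ ε * sZero r₁ r₂ ε))) +
        muEps r₁ r₂ ε * muConst r₁ r₂ 2 *
          (2 * (1/(2 * aEps r₁ r₂ ε * sZero r₁ r₂ ε))) =
        2 * (muEps r₁ r₂ ε * (1/(2 * aEps r₁ r₂ ε * sZero r₁ r₂ ε))) := by
      linear_combination (2 * (muEps r₁ r₂ ε) *
        (1/(2 * aEps r₁ r₂ ε * sZero r₁ r₂ ε))) * hmsum
    linarith
  have hbdd : BddAbove S := ⟨_, fun y hy => hub y hy⟩
  have hsup_ge : 2 * (muEps r₁ r₂ ε * (1/(2 * aEps r₁ r₂ ε * sZero r₁ r₂ ε))) ≤ sSup S := by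
    calc 2 * (muEps r₁ r₂ ε * (1/(2 * aEps r₁ r₂ ε * sZero r₁ r₂ ε)))
        ≤ |qh r₁ r₂ ε 0 Real.pi| := by
          rw [abs_of_nonneg (hqh_nonneg 0 Real.pi)]; exact hq0
      _ ≤ sSup S := le_csSup hbdd hmem
  have hsup_le : sSup S ≤ 8 * (muEps r₁ r₂ ε * (1/(2 * aEps r₁ r₂ ε * sZero r₁ r₂ ε))) :=
    Real.sSup_le hub (by linarith [mul_pos hmu_pos hMpos])
  have hεl0 : 0 ≤ ε * |Real.log ε| := mul_nonneg hε0.le (abs_nonneg _)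
  constructor
  · have key : ε * |Real.log ε| *
        (2 * ((1/(4*Real.pi*rTilde r₁ r₂*|Real.log ε|)) * (rTilde r₁ r₂/(2*c₂*ε)))) =
        1/(4*Real.pi*c₂) := by
      field_simp [hπ.ne', hrt.ne', hlogpos.ne', hε0.ne', hc₂.ne']
    have hlowM : 0 ≤ rTilde r₁ r₂/(2*c₂*ε) :=
      (div_pos hrt (by positivity)).le
    have step1 : 2 * ((1/(4*Real.pi*rTilde r₁ r₂*|Real.log ε|)) * (rTilde r₁ r₂/(2*c₂*ε))) ≤
        2 * (muEps r₁ r₂ ε * (1/(2 * aEps r₁ r₂ ε * sZero r₁ r₂ ε))) := by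
      have := mul_le_mul hmu_l hM_l hlowM hmu_pos.le
      linarith
    calc 1/(4*Real.pi*c₂)
        = ε * |Real.log ε| *
            (2 * ((1/(4*Real.pi*rTilde r₁ r₂*|Real.log ε|)) * (rTilde r₁ r₂/(2*c₂*ε)))) :=
          key.symm
      _ ≤ ε * |Real.log ε| *
            (2 * (muEps r₁ r₂ ε * (1/(2 * aEps r₁ r₂ ε * sZero r₁ r₂ ε)))) :=
          mul_le_mul_of_nonneg_left step1 hεl0
      _ ≤ ε * |Real.log ε| * sSup S := mul_le_mul_of_nonneg_left hsup_ge hεl0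
  · have key : ε * |Real.log ε| *
        (8 * ((1/(Real.pi*rTilde r₁ r₂*|Real.log ε|)) * (rTilde r₁ r₂/(c₁*ε)))) =
        8/(Real.pi*c₁) := by
      field_simp [hπ.ne', hrt.ne', hlogpos.ne', hε0.ne', hc₁.ne']
    have step1 : 8 * (muEps r₁ r₂ ε * (1/(2 * aEps r₁ r₂ ε * sZero r₁ r₂ ε))) ≤
        8 * ((1/(Real.pi*rTilde r₁ r₂*|Real.log ε|)) * (rTilde r₁ r₂/(c₁*ε))) := by
      have := mul_le_mul hmu_u hM_u hMpos.le
        (div_pos one_pos (mul_pos (mul_pos hπ hrt) hlogpos)).le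
      linarith
    calc ε * |Real.log ε| * sSup S
        ≤ ε * |Real.log ε| *
            (8 * (muEps r₁ r₂ ε * (1/(2 * aEps r₁ r₂ ε * sZero r₁ r₂ ε)))) :=
          mul_le_mul_of_nonneg_left hsup_le hεl0
      _ ≤ ε * |Real.log ε| *
            (8 * ((1/(Real.pi*rTilde r₁ r₂*|Real.log ε|)) * (rTilde r₁ r₂/(c₁*ε)))) :=
          mul_le_mul_of_nonneg_left step1 hεl0
      _ = 8/(Real.pi*c₁) := key


end
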